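/- In the Picard lattice of a smooth rational surface, if B₂ and B₃ are classes with B₂² = B₃² = -1, K·B₂ = K·B₃ = -1, and D = 2K + B₁ + B₂ + B₃ satisfies D² = 7, D·B₂ = 5, D·B₃ = 3, D·B₁ = 5, B₁ = F + Γ with Γ = 3K + B₁ + B₂ + B₃, then (B₂ - (-2K - Γ))² = 0 and D·(B₂ - (-2K - Γ)) = 0; by the Hodge index theorem (D nef and big) B₂ ≡ -2K - Γ numerically. -/
import Mathlib


/-- Lattice computation in the Picard lattice of a smooth rational surface: with
`D = 2K + B₁ + B₂ + B₃`, `M = K + D`, `Γ = M + K`, `B₁ = F + Γ`, and intersection numbers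
`D² = 7`, `D·B₁ = D·B₂ = 5`, `D·B₃ = 3`, `B_i² = -1`, `B₁B₂ = 7`, `B₁B₃ = 5`, `B₂B₃ = 1`,
one has `(B₂ - (-2K - Γ))² = 0` and `D·(B₂ - (-2K - Γ)) = 0`; the Hodge index theorem for
the nef and big class `D` then gives the numerical equivalence `B₂ ≡ -2K - Γ`. -/
theorem B2_numerically_equivalent (Div : Type*) [AddCommGroup Div]
    (inter : Div → Div → ℤ)
    (hadd : ∀ x y z, inter (x + y) z = inter x z + inter y z)
    (hsymm : ∀ x y, inter x y = inter y x)
    (K F Γ B1 B2 B3 D M : Div)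
    (hD : D = 2 • K + B1 + B2 + B3)
    (hMdef : M = K + D)
    (hΓ : Γ = M + K)
    (hB1 : B1 = F + Γ)
    (hD2 : inter D D = 7)
    (hDB1 : inter D B1 = 5) (hDB2 : inter D B2 = 5) (hDB3 : inter D B3 = 3)
    (hB1sq : inter B1 B1 = -1) (hB2sq : inter B2 B2 = -1) (hB3sq : inter B3 B3 = -1)
    (hB1B2 : inter B1 B2 = 7) (hB1B3 : inter B1 B3 = 5) (hB2B3 : inter B2 B3 = 1)
    (NumEq : Div → Div → Prop)
    -- Hodge index theorem for the nef and big class `D`: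
    (hHI : ∀ x y : Div, inter D (x - y) = 0 → inter (x - y) (x - y) = 0 → NumEq x y) :
    inter (B2 - (-(2 • K) - Γ)) (B2 - (-(2 • K) - Γ)) = 0 ∧
    inter D (B2 - (-(2 • K) - Γ)) = 0 ∧
    NumEq B2 (-(2 • K) - Γ) := by
  have hzero : ∀ z, inter 0 z = 0 := by
    intro z
    have := hadd 0 0 z
    simpa using this.symm
  have hneg : ∀ x z, inter (-x) z = - inter x z := by
    intro x z
    have h := hadd x (-x) z
    simp [hzero] at h
    linarith
  have haddr : ∀ x y z, inter z (x + y) = inter z x + inter z y := by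
    intro x y z
    rw [hsymm, hadd, hsymm x z, hsymm y z]
  have hnegr : ∀ x z, inter z (-x) = - inter z x := by
    intro x z
    rw [hsymm, hneg, hsymm]
  have hsub : ∀ x y z, inter (x - y) z = inter x z - inter y z := by
    intro x y z; rw [sub_eq_add_neg, hadd, hneg]; ring
  have hsubr : ∀ x y z, inter z (x - y) = inter z x - inter z y := by
    intro x y z; rw [hsymm, hsub, hsymm x z, hsymm y z]
  subst hΓ hMdef hD
  have e2 : inter (2 • K + B1 + B2 + B3)
      (B2 - (-(2 • K) - (K + (2 • K + B1 + B2 + B3) + K))) = 0 := by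
    simp only [two_smul, hadd, haddr, hneg, hnegr, hsub, hsubr]
    simp only [two_smul, hadd, haddr, hneg, hnegr, hsub, hsubr] at hD2 hDB1 hDB2 hDB3
    linarith [hsymm K B1, hsymm K B2, hsymm K B3, hsymm B1 B2, hsymm B1 B3, hsymm B2 B3]
  have e1 : inter (B2 - (-(2 • K) - (K + (2 • K + B1 + B2 + B3) + K)))
      (B2 - (-(2 • K) - (K + (2 • K + B1 + B2 + B3) + K))) = 0 := by
    simp only [two_smul, hadd, haddr, hneg, hnegr, hsub, hsubr]
    simp only [two_smul, hadd, haddr, hneg, hnegr, hsub, hsubr] at hD2 hDB1 hDB2 hDB3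
    linarith [hsymm K B1, hsymm K B2, hsymm K B3, hsymm B1 B2, hsymm B1 B3, hsymm B2 B3]
  exact ⟨e1, e2, hHI _ _ e2 e1⟩
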